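/- Suppose ‖ε‖_n > 0, ‖ε̂‖_n ≠ 0, and (λ⁰/λ)(1 + 2f) < 1. Then 1 + f ≥ ‖ε̂‖_n/‖ε‖_n ≥ (1 − (λ⁰/λ)(1 + 2f))/(f + 2) > 0. -/

import Mathlib

open scoped BigOperators

/-- The normalized norm `‖a‖_n = sqrt( (∑ a_j^2) / n )`. -/
noncomputable def normN {n : ℕ} (a : Fin n → ℝ) : ℝ :=
  Real.sqrt ((∑ j, a j ^ 2) / n)

/-- `Ω` is a norm on `ℝ^p`. -/
def IsNorm {p : ℕ} (Ω : (Fin p → ℝ) → ℝ) : Prop :=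
  (∀ x y, Ω (x + y) ≤ Ω x + Ω y) ∧
  (∀ (c : ℝ) (x), Ω (c • x) = |c| * Ω x) ∧
  (∀ x, Ω x = 0 → x = 0)

/-- The dual norm `Ω*(x) = max_{Ω(z) ≤ 1} zᵀx`. -/
noncomputable def dualNorm {p : ℕ} (Ω : (Fin p → ℝ) → ℝ) (x : Fin p → ℝ) : ℝ :=
  sSup {r | ∃ z, Ω z ≤ 1 ∧ r = ∑ i, z i * x i}

/-- `β_S` : the restriction of `β` to `S`, extended by zero off `S`. -/
def restrict {p : ℕ} (S : Finset (Fin p)) (β : Fin p → ℝ) : Fin p → ℝ :=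
  fun i => if i ∈ S then β i else 0

/-- `Ω'` is a norm on the coordinates in `Sᶜ` (definiteness is required only for
vectors vanishing on `S`). -/
def IsNormOn {p : ℕ} (S : Finset (Fin p)) (Ω' : (Fin p → ℝ) → ℝ) : Prop :=
  (∀ x y, Ω' (x + y) ≤ Ω' x + Ω' y) ∧
  (∀ (c : ℝ) (x), Ω' (c • x) = |c| * Ω' x) ∧
  (∀ x, (∀ i ∈ S, x i = 0) → Ω' x = 0 → x = 0)

/-- `Ω` is weakly decomposable for the (allowed) set `S`, with associated norm `Ωc`
on the coordinates in `Sᶜ`. -/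
def WeaklyDecomposable {p : ℕ} (Ω : (Fin p → ℝ) → ℝ) (S : Finset (Fin p))
    (Ωc : (Fin p → ℝ) → ℝ) : Prop :=
  IsNorm Ω ∧ IsNormOn S Ωc ∧
  ∀ β : Fin p → ℝ, Ω (restrict S β) + Ωc (restrict Sᶜ β) ≤ Ω β

/-- The `Ω`-eigenvalue `δ_Ω(L,S)`. -/
noncomputable def omegaEigen {n p : ℕ} (X : Matrix (Fin n) (Fin p) ℝ)
    (Ω Ωc : (Fin p → ℝ) → ℝ) (S : Finset (Fin p)) (L : ℝ) : ℝ :=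
  sInf {r | ∃ β : Fin p → ℝ, Ω (restrict S β) = 1 ∧ Ωc (restrict Sᶜ β) ≤ L ∧
    r = normN (X.mulVec (restrict S β) - X.mulVec (restrict Sᶜ β))}

/-- The `Ω`-effective sparsity `Γ_Ω²(L,S) = 1/δ_Ω²(L,S)`. -/
noncomputable def effSparsity {n p : ℕ} (X : Matrix (Fin n) (Fin p) ℝ)
    (Ω Ωc : (Fin p → ℝ) → ℝ) (S : Finset (Fin p)) (L : ℝ) : ℝ :=
  1 / (omegaEigen X Ω Ωc S L) ^ 2


private def Syn (p : ℕ) : Type := Fin p → ℝ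

private lemma omZero {p : ℕ} (Ω : (Fin p → ℝ) → ℝ) (hΩ : IsNorm Ω) : Ω 0 = 0 := by
  have := hΩ.2.1 0 0
  simpa using this

private lemma omNeg {p : ℕ} (Ω : (Fin p → ℝ) → ℝ) (hΩ : IsNorm Ω) (z : Fin p → ℝ) :
    Ω (-z) = Ω z := by
  have := hΩ.2.1 (-1) z
  simpa using this

private lemma omNonneg {p : ℕ} (Ω : (Fin p → ℝ) → ℝ) (hΩ : IsNorm Ω) (z : Fin p → ℝ) :
    0 ≤ Ω z := by
  have h := hΩ.1 z (-z)
  rw [add_neg_cancel, omZero Ω hΩ, omNeg Ω hΩ] at h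
  linarith

private lemma dual_func_bound {p : ℕ} (Ω : (Fin p → ℝ) → ℝ) (hΩ : IsNorm Ω)
    (x : Fin p → ℝ) :
    ∃ C : ℝ, 0 ≤ C ∧ ∀ z : Fin p → ℝ, |∑ i, z i * x i| ≤ C * Ω z := by
  letI : AddCommGroup (Syn p) := inferInstanceAs (AddCommGroup (Fin p → ℝ))
  letI : Module ℝ (Syn p) := inferInstanceAs (Module ℝ (Fin p → ℝ))
  letI : NormedAddCommGroup (Syn p) :=
    AddGroupNorm.toNormedAddCommGroup
      { toFun := Ω
        map_zero' := omZero Ω hΩ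
        add_le' := hΩ.1
        neg' := omNeg Ω hΩ
        eq_zero_of_map_eq_zero' := fun z hz => hΩ.2.2 z hz }
  letI : NormedSpace ℝ (Syn p) := ⟨fun c z => le_of_eq (hΩ.2.1 c z)⟩
  haveI : FiniteDimensional ℝ (Syn p) :=
    inferInstanceAs (FiniteDimensional ℝ (Fin p → ℝ))
  let φ : Syn p →ₗ[ℝ] ℝ :=
    { toFun := fun z => ∑ i, (show Fin p → ℝ from z) i * x i
      map_add' := fun a b => by
        show (∑ i, (a i + b i) * x i) = (∑ i, a i * x i) + ∑ i, b i * x i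
        simp [add_mul, Finset.sum_add_distrib]
      map_smul' := fun c a => by
        show (∑ i, (c * a i) * x i) = (RingHom.id ℝ) c * ∑ i, a i * x i
        simp [Finset.mul_sum, mul_assoc] }
  let φ' : Syn p →L[ℝ] ℝ := LinearMap.toContinuousLinearMap φ
  refine ⟨‖φ'‖, norm_nonneg _, fun z => ?_⟩
  have h := φ'.le_opNorm (show Syn p from z)
  exact h

private lemma dualNorm_bddAbove {p : ℕ} (Ω : (Fin p → ℝ) → ℝ) (hΩ : IsNorm Ω)
    (x : Fin p → ℝ) :
    BddAbove {r | ∃ z, Ω z ≤ 1 ∧ r = ∑ i, z i * x i} := by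
  obtain ⟨C, hC0, hC⟩ := dual_func_bound Ω hΩ x
  refine ⟨C, fun r hr => ?_⟩
  obtain ⟨z, hz, rfl⟩ := hr
  calc ∑ i, z i * x i ≤ |∑ i, z i * x i| := le_abs_self _
    _ ≤ C * Ω z := hC z
    _ ≤ C * 1 := mul_le_mul_of_nonneg_left hz hC0
    _ = C := mul_one C

private lemma dualNorm_nonneg {p : ℕ} (Ω : (Fin p → ℝ) → ℝ) (hΩ : IsNorm Ω)
    (x : Fin p → ℝ) : 0 ≤ dualNorm Ω x := by
  apply le_csSup (dualNorm_bddAbove Ω hΩ x)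
  exact ⟨0, by simp [omZero Ω hΩ]⟩

private lemma dual_ineq {p : ℕ} (Ω : (Fin p → ℝ) → ℝ) (hΩ : IsNorm Ω)
    (x z : Fin p → ℝ) : ∑ i, z i * x i ≤ dualNorm Ω x * Ω z := by
  rcases eq_or_lt_of_le (omNonneg Ω hΩ z) with h0 | h0
  · have hz : z = 0 := hΩ.2.2 z h0.symm
    simp [hz, omZero Ω hΩ]
  · have hw : Ω ((Ω z)⁻¹ • z) = 1 := by
      rw [hΩ.2.1, abs_of_pos (inv_pos.mpr h0), inv_mul_cancel₀ (ne_of_gt h0)]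
    have hmem : (∑ i, ((Ω z)⁻¹ • z) i * x i) ∈
        {r | ∃ w, Ω w ≤ 1 ∧ r = ∑ i, w i * x i} := ⟨_, le_of_eq hw, rfl⟩
    have hle := le_csSup (dualNorm_bddAbove Ω hΩ x) hmem
    have hsum : (∑ i, ((Ω z)⁻¹ • z) i * x i) = (Ω z)⁻¹ * ∑ i, z i * x i := by
      simp [Finset.mul_sum, mul_assoc]
    rw [hsum] at hle
    calc ∑ i, z i * x i = Ω z * ((Ω z)⁻¹ * ∑ i, z i * x i) := by
          field_simp
      _ ≤ Ω z * dualNorm Ω x := mul_le_mul_of_nonneg_left hle (le_of_lt h0)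
      _ = dualNorm Ω x * Ω z := mul_comm _ _

private lemma normN_nonneg {n : ℕ} (a : Fin n → ℝ) : 0 ≤ normN a := Real.sqrt_nonneg _

private lemma normN_sq {n : ℕ} (a : Fin n → ℝ) : (normN a) ^ 2 = (∑ j, a j ^ 2) / n := by
  rw [normN, Real.sq_sqrt]
  positivity

private lemma sum_mul_le_normN {n : ℕ} (a b : Fin n → ℝ) :
    ∑ j, a j * b j ≤ n * (normN a * normN b) := by
  have hcs : (∑ j, a j * b j) ^ 2 ≤ (∑ j, a j ^ 2) * ∑ j, b j ^ 2 :=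
    Finset.sum_mul_sq_le_sq_mul_sq _ _ _
  have h1 : ∑ j, a j * b j ≤ Real.sqrt ((∑ j, a j ^ 2) * ∑ j, b j ^ 2) := by
    calc ∑ j, a j * b j ≤ |∑ j, a j * b j| := le_abs_self _
      _ = Real.sqrt ((∑ j, a j * b j) ^ 2) := (Real.sqrt_sq_eq_abs _).symm
      _ ≤ Real.sqrt ((∑ j, a j ^ 2) * ∑ j, b j ^ 2) := Real.sqrt_le_sqrt hcs
  rcases Nat.eq_zero_or_pos n with hn | hn
  · subst hn; simp
  have hn' : (0:ℝ) < n := by exact_mod_cast hn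
  have h2 : (n : ℝ) * (normN a * normN b)
      = Real.sqrt ((∑ j, a j ^ 2) * ∑ j, b j ^ 2) := by
    calc (n:ℝ) * (normN a * normN b)
        = Real.sqrt ((n:ℝ)^2) *
          (Real.sqrt ((∑ j, a j ^ 2)/n) * Real.sqrt ((∑ j, b j ^ 2)/n)) := by
          rw [Real.sqrt_sq hn'.le]; rfl
      _ = Real.sqrt ((n:ℝ)^2 * ((∑ j, a j ^ 2)/n * ((∑ j, b j ^ 2)/n))) := by
          rw [Real.sqrt_mul (by positivity), Real.sqrt_mul (by positivity)]
      _ = Real.sqrt ((∑ j, a j ^ 2) * ∑ j, b j ^ 2) := by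
          congr 1
          field_simp
  rw [h2]; exact h1

/-- bounds on the ratio `‖ε̂‖_n / ‖ε‖_n` under Assumption I. -/
theorem residual_ratio_bounds {n p : ℕ} (Y ε : Fin n → ℝ)
    (X : Matrix (Fin n) (Fin p) ℝ) (β0 : Fin p → ℝ) (hY : Y = X.mulVec β0 + ε)
    (Ω : (Fin p → ℝ) → ℝ) (hΩ : IsNorm Ω) (lam : ℝ) (hlam : 0 < lam)
    (bh : Fin p → ℝ)
    (hmin : ∀ β : Fin p → ℝ,
      normN (Y - X.mulVec bh) + lam * Ω bh ≤ normN (Y - X.mulVec β) + lam * Ω β)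
    (f lam0 : ℝ)
    (hf : f = lam * Ω β0 / normN ε)
    (hlam0 : lam0 = dualNorm Ω (Matrix.vecMul ε X) / (n * normN ε))
    (hε : 0 < normN ε) (hεh : normN (Y - X.mulVec bh) ≠ 0)
    (hA : (lam0 / lam) * (1 + 2 * f) < 1) :
    1 + f ≥ normN (Y - X.mulVec bh) / normN ε ∧
    normN (Y - X.mulVec bh) / normN ε
      ≥ (1 - (lam0 / lam) * (1 + 2 * f)) / (f + 2) ∧
    (1 - (lam0 / lam) * (1 + 2 * f)) / (f + 2) > 0 := by
  have hΩbh : 0 ≤ Ω bh := omNonneg Ω hΩ bh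
  have hΩβ0 : 0 ≤ Ω β0 := omNonneg Ω hΩ β0
  have hR0 : 0 ≤ normN (Y - X.mulVec bh) := normN_nonneg _
  have hn : 0 < (n : ℝ) := by
    by_contra h
    push_neg at h
    have hn0 : n = 0 := by exact_mod_cast le_antisymm (by exact_mod_cast h) (Nat.zero_le n)
    subst hn0
    simp [normN] at hε
  have hf0 : 0 ≤ f := by
    rw [hf]; positivity
  have hfE : f * normN ε = lam * Ω β0 := by
    rw [hf]; field_simp
  -- basic inequality
  have h0 : Y - X.mulVec β0 = ε := by rw [hY]; abel
  have hbasic : normN (Y - X.mulVec bh) + lam * Ω bh ≤ normN ε + lam * Ω β0 := by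
    have := hmin β0
    rwa [h0] at this
  have hup : normN (Y - X.mulVec bh) ≤ normN ε + lam * Ω β0 := by
    nlinarith [mul_nonneg hlam.le hΩbh]
  -- residual identity
  have hres : Y - X.mulVec bh = ε - X.mulVec (bh - β0) := by
    rw [hY, Matrix.mulVec_sub]; abel
  -- split sum
  have hsum_split : ∑ j, ε j ^ 2 =
      (∑ j, ε j * (Y - X.mulVec bh) j) + ∑ j, ε j * (X.mulVec (bh - β0)) j := by
    rw [hres, ← Finset.sum_add_distrib]
    apply Finset.sum_congr rfl
    intro j _
    simp only [Pi.sub_apply]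
    ring
  have hCS : ∑ j, ε j * (Y - X.mulVec bh) j
      ≤ n * (normN ε * normN (Y - X.mulVec bh)) := sum_mul_le_normN ε _
  have hne : (n : ℝ) * normN ε ≠ 0 := by positivity
  have hdN : dualNorm Ω (Matrix.vecMul ε X) = lam0 * ((n : ℝ) * normN ε) := by
    rw [hlam0, div_mul_cancel₀ _ hne]
  have hl0 : 0 ≤ lam0 := by
    rw [hlam0]
    exact div_nonneg (dualNorm_nonneg Ω hΩ _) (by positivity)
  have hdual : ∑ j, ε j * (X.mulVec (bh - β0)) j
      ≤ lam0 * ((n : ℝ) * normN ε) * Ω (bh - β0) := by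
    have h1 : ∑ j, ε j * (X.mulVec (bh - β0)) j
        = ∑ i, (bh - β0) i * Matrix.vecMul ε X i := by
      have h2 : dotProduct ε (X.mulVec (bh - β0))
          = dotProduct (Matrix.vecMul ε X) (bh - β0) :=
        Matrix.dotProduct_mulVec ε X (bh - β0)
      simpa [dotProduct, mul_comm] using h2
    rw [h1, ← hdN]
    exact dual_ineq Ω hΩ _ _
  have hsq : (n : ℝ) * normN ε ^ 2 = ∑ j, ε j ^ 2 := by
    rw [normN_sq]; field_simp
  have hkey2 : normN ε ≤ normN (Y - X.mulVec bh) + lam0 * Ω (bh - β0) := by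
    have htot : (n : ℝ) * normN ε ^ 2
        ≤ (n : ℝ) * (normN ε * normN (Y - X.mulVec bh))
          + lam0 * ((n : ℝ) * normN ε) * Ω (bh - β0) := by
      rw [hsq, hsum_split]
      exact add_le_add hCS hdual
    nlinarith [mul_pos hn hε, htot]
  -- triangle inequality for Ω (bh - β0)
  have htri : Ω (bh - β0) ≤ Ω bh + Ω β0 := by
    have h := hΩ.1 bh (-β0)
    rw [omNeg Ω hΩ] at h
    simpa [sub_eq_add_neg] using h
  have hD : lam * Ω (bh - β0)
      ≤ (normN ε - normN (Y - X.mulVec bh)) + 2 * (lam * Ω β0) := by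
    nlinarith [mul_le_mul_of_nonneg_left htri hlam.le]
  set t : ℝ := lam0 / lam with htdef
  have ht0 : 0 ≤ t := div_nonneg hl0 hlam.le
  have hld : lam0 * Ω (bh - β0)
      ≤ t * ((normN ε - normN (Y - X.mulVec bh)) + 2 * (f * normN ε)) := by
    calc lam0 * Ω (bh - β0) = t * (lam * Ω (bh - β0)) := by
          rw [htdef]; field_simp
      _ ≤ t * ((normN ε - normN (Y - X.mulVec bh)) + 2 * (lam * Ω β0)) :=
          mul_le_mul_of_nonneg_left hD ht0
      _ = t * ((normN ε - normN (Y - X.mulVec bh)) + 2 * (f * normN ε)) := by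
          rw [← hfE]
  have hcomb : normN ε ≤ normN (Y - X.mulVec bh)
      + t * ((normN ε - normN (Y - X.mulVec bh)) + 2 * (f * normN ε)) := by
    linarith [hkey2, hld]
  have hRlow : normN ε * (1 - t * (1 + 2 * f)) ≤ normN (Y - X.mulVec bh) := by
    linarith [hcomb, mul_nonneg hR0 ht0]
  refine ⟨?_, ?_, ?_⟩
  · rw [ge_iff_le, div_le_iff₀ hε]
    calc normN (Y - X.mulVec bh) ≤ normN ε + lam * Ω β0 := hup
      _ = (1 + f) * normN ε := by rw [← hfE]; ring
  · rw [ge_iff_le, div_le_div_iff₀ (by linarith : (0:ℝ) < f + 2) hε]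
    linarith [hRlow, mul_nonneg hR0 hf0]
  · exact div_pos (by linarith [hA]) (by linarith)
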